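/- There is a constant C > 0 such that for every ω ≥ 1 and every Schwartz function f on ℝ³ = ℝ² × ℝ (variables (x,z)), one has ‖∇f‖²_{L²(ℝ³)} ≤ C ω E_ω(f). -/

import Mathlib

open MeasureTheory Complex

noncomputable section

/-- ℝ² with the Euclidean norm. -/
abbrev R2 : Type := EuclideanSpace ℝ (Fin 2)

/-- ℝ³ written as ℝ² × ℝ, points r = (x, z). -/
abbrev R3 : Type := R2 × ℝ

/-- Directional derivative of `f` at `p` in the direction `v`. -/
def pd {E F : Type*} [NormedAddCommGroup E] [NormedSpace ℝ E]
    [NormedAddCommGroup F] [NormedSpace ℝ F] (v : E) (f : E → F) (p : E) : F :=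
  fderiv ℝ f p v

/-- First coordinate direction in the x-plane. -/
def ex0 : R3 := (EuclideanSpace.single 0 1, 0)

/-- Second coordinate direction in the x-plane. -/
def ex1 : R3 := (EuclideanSpace.single 1 1, 0)

/-- The z-direction. -/
def ez : R3 := (0, 1)

/-- The quadratic form
`E_ω(f) = ‖f‖² + ‖∇ₓf‖² + ‖∂_z f‖² + ω²‖z f‖² − ω‖f‖²` on L²(ℝ³). -/
def Eform (ω : ℝ) (f : R3 → ℂ) : ℝ :=
  (∫ p : R3, ‖f p‖ ^ 2) +
    ((∫ p : R3, ‖pd ex0 f p‖ ^ 2) + (∫ p : R3, ‖pd ex1 f p‖ ^ 2)) +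
    (∫ p : R3, ‖pd ez f p‖ ^ 2) +
    ω ^ 2 * (∫ p : R3, p.2 ^ 2 * ‖f p‖ ^ 2) -
    ω * (∫ p : R3, ‖f p‖ ^ 2)

/-- `‖w‖² = re(w)² + im(w)²` for a complex number. -/
instance : (volume : Measure R3).IsAddHaarMeasure :=
  Measure.prod.instIsAddHaarMeasure volume volume

lemma norm_sq_complex (w : ℂ) : ‖w‖ ^ 2 = w.re ^ 2 + w.im ^ 2 := by
  rw [Complex.sq_norm, Complex.normSq_apply]; ring

/-- Master integrability lemma: any continuous function dominated by
`c * |z|^k * ‖g‖ * ‖h‖` with `g, h` Schwartz is integrable. -/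
lemma integrable_aux (g h : SchwartzMap R3 ℂ) (k : ℕ) (c : ℝ) (u : R3 → ℝ)
    (hu : Continuous u)
    (hb : ∀ p : R3, |u p| ≤ c * (|p.2| ^ k * (‖g p‖ * ‖h p‖))) :
    Integrable u := by
  obtain ⟨C, -, hC⟩ := g.decay k 0
  have hC' : ∀ p : R3, ‖p‖ ^ k * ‖g p‖ ≤ C := by
    intro p
    have := hC p
    rwa [norm_iteratedFDeriv_zero] at this
  refine Integrable.mono' ((h.integrable.norm).const_mul (|c| * C))
    hu.aestronglyMeasurable (Filter.Eventually.of_forall fun p => ?_)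
  have h1 : |u p| ≤ |c| * (|p.2| ^ k * (‖g p‖ * ‖h p‖)) :=
    (hb p).trans (by
      have : (0:ℝ) ≤ |p.2| ^ k * (‖g p‖ * ‖h p‖) := by positivity
      nlinarith [le_abs_self c])
  have h2 : |p.2| ^ k * ‖g p‖ ≤ ‖p‖ ^ k * ‖g p‖ := by
    have : |p.2| ≤ ‖p‖ := by
      have := norm_snd_le p
      simpa using this
    gcongr
  have h3 : |p.2| ^ k * ‖g p‖ ≤ C := h2.trans (hC' p)
  have h4 : |c| * (|p.2| ^ k * (‖g p‖ * ‖h p‖)) ≤ |c| * C * ‖h p‖ := by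
    have hn : (0:ℝ) ≤ ‖h p‖ := norm_nonneg _
    nlinarith [abs_nonneg c, mul_le_mul_of_nonneg_right h3 hn]
  calc ‖u p‖ = |u p| := Real.norm_eq_abs _
    _ ≤ |c| * C * ‖h p‖ := h1.trans h4

/-- Cauchy–Schwarz for the real pairing of complex numbers. -/
lemma re_pair_le (a b : ℂ) : |a.re * b.re + a.im * b.im| ≤ ‖a‖ * ‖b‖ := by
  have h1 : ((starRingEnd ℂ) a * b).re = a.re * b.re + a.im * b.im := by
    simp [Complex.mul_re]
  have h2 : |((starRingEnd ℂ) a * b).re| ≤ ‖(starRingEnd ℂ) a * b‖ :=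
    Complex.abs_re_le_norm _
  rw [h1] at h2
  calc |a.re * b.re + a.im * b.im| ≤ ‖(starRingEnd ℂ) a * b‖ := h2
    _ = ‖a‖ * ‖b‖ := by rw [norm_mul, RCLike.norm_conj]

/-- The harmonic-oscillator lower bound:
`ω ∫‖f‖² ≤ ∫‖∂_z f‖² + ω² ∫ z²‖f‖²`. -/
lemma oscillator_bound (ω : ℝ) (f : SchwartzMap R3 ℂ) :
    ω * (∫ p : R3, ‖f p‖ ^ 2) ≤
      (∫ p : R3, ‖pd ez (⇑f) p‖ ^ 2) +
        ω ^ 2 * (∫ p : R3, p.2 ^ 2 * ‖f p‖ ^ 2) := by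
  set fz : SchwartzMap R3 ℂ := LineDeriv.lineDerivOpCLM ℝ (SchwartzMap R3 ℂ) ez f with hfzdef
  have hfz : ∀ p : R3, pd ez (⇑f) p = fz p := by
    intro p; rw [hfzdef, LineDeriv.lineDerivOpCLM_apply, SchwartzMap.lineDerivOp_apply_eq_fderiv]; rfl
  set Dp : R3 → ℝ := fun p => 2 * ((f p).re * (fz p).re + (f p).im * (fz p).im)
    with hDp
  have hDpbound : ∀ p : R3, |Dp p| ≤ 2 * (‖f p‖ * ‖fz p‖) := by
    intro p
    rw [hDp]
    calc |2 * ((f p).re * (fz p).re + (f p).im * (fz p).im)|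
        = 2 * |(f p).re * (fz p).re + (f p).im * (fz p).im| := by
          rw [abs_mul]; norm_num
      _ ≤ 2 * (‖f p‖ * ‖fz p‖) := by
          have := re_pair_le (f p) (fz p); linarith
  -- integrability facts
  have contf : Continuous (⇑f) := f.continuous
  have contfz : Continuous (⇑fz) := fz.continuous
  have contDp : Continuous Dp := by
    rw [hDp]; fun_prop
  have I1 : Integrable (fun p : R3 => ‖f p‖ ^ 2) := by
    refine integrable_aux f f 0 1 _ (by fun_prop) fun p => ?_
    simp [_root_.abs_of_nonneg (by positivity : (0:ℝ) ≤ ‖f p‖ ^ 2), pow_two]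
  have I2 : Integrable (fun p : R3 => ‖fz p‖ ^ 2) := by
    refine integrable_aux fz fz 0 1 _ (by fun_prop) fun p => ?_
    simp [_root_.abs_of_nonneg (by positivity : (0:ℝ) ≤ ‖fz p‖ ^ 2), pow_two]
  have IZ : Integrable (fun p : R3 => p.2 ^ 2 * ‖f p‖ ^ 2) := by
    refine integrable_aux f f 2 1 _ (by fun_prop) fun p => le_of_eq ?_
    rw [_root_.abs_of_nonneg (by positivity), one_mul, _root_.sq_abs]
    ring
  have IH : Integrable (fun p : R3 => p.2 * ‖f p‖ ^ 2) := by
    refine integrable_aux f f 1 1 _ (by fun_prop) fun p => le_of_eq ?_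
    rw [abs_mul, _root_.abs_of_nonneg (by positivity : (0:ℝ) ≤ ‖f p‖ ^ 2)]
    ring
  have ID : Integrable (fun p : R3 => p.2 * Dp p) := by
    refine integrable_aux f fz 1 2 _ (by fun_prop) fun p => ?_
    rw [abs_mul, pow_one]
    have := hDpbound p
    nlinarith [abs_nonneg p.2, abs_nonneg (Dp p)]
  have IK : Integrable (fun p : R3 => ‖f p‖ ^ 2 + p.2 * Dp p) := I1.add ID
  -- the slice derivative
  have hderiv : ∀ (x : R2) (z : ℝ),
      HasDerivAt (fun z : ℝ => z * ‖f (x, z)‖ ^ 2)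
        (‖f (x, z)‖ ^ 2 + z * Dp (x, z)) z := by
    intro x z
    have hc : ∀ z : ℝ, HasDerivAt (fun z : ℝ => ((x, z) : R3)) ez z := fun z =>
      (hasDerivAt_const z x).prodMk (hasDerivAt_id z)
    have hphi : ∀ z : ℝ, HasDerivAt (fun z : ℝ => f (x, z)) (fz (x, z)) z := by
      intro z
      have h1 := (f.differentiableAt (x := ((x, z) : R3))).hasFDerivAt
      have h2 := h1.comp_hasDerivAt z (hc z)
      have : fderiv ℝ (⇑f) ((x, z) : R3) ez = fz (x, z) := hfz ((x, z) : R3)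
      rw [this] at h2
      exact h2
    have hre : HasDerivAt (fun z : ℝ => (f (x, z)).re) ((fz (x, z)).re) z :=
      Complex.reCLM.hasFDerivAt.comp_hasDerivAt z (hphi z)
    have him : HasDerivAt (fun z : ℝ => (f (x, z)).im) ((fz (x, z)).im) z :=
      Complex.imCLM.hasFDerivAt.comp_hasDerivAt z (hphi z)
    have hg : HasDerivAt (fun z : ℝ => (f (x, z)).re ^ 2 + (f (x, z)).im ^ 2)
        (Dp (x, z)) z := by
      have h := ((hre.mul hre).add (him.mul him))
      refine (h.congr_deriv ?_).congr_of_eventuallyEq ?_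
      · rw [hDp]; ring
      · exact Filter.Eventually.of_forall fun w => by simp only [Pi.add_apply, Pi.mul_apply]; ring
    have hg' : HasDerivAt (fun z : ℝ => ‖f (x, z)‖ ^ 2) (Dp (x, z)) z := by
      have : (fun z : ℝ => ‖f (x, z)‖ ^ 2)
          = fun z : ℝ => (f (x, z)).re ^ 2 + (f (x, z)).im ^ 2 :=
        funext fun z => norm_sq_complex _
      rw [this]; exact hg
    have h := (hasDerivAt_id z).mul hg'
    refine h.congr_deriv ?_; simp
  -- the integral of the z-derivative vanishes
  have hK0 : (∫ p : R3, (‖f p‖ ^ 2 + p.2 * Dp p)) = 0 := by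
    have hvol : (volume : Measure R3) = (volume : Measure R2).prod volume :=
      Measure.volume_eq_prod R2 ℝ
    have IK' : Integrable (fun p : R3 => ‖f p‖ ^ 2 + p.2 * Dp p)
        ((volume : Measure R2).prod volume) := by rwa [← hvol]
    have IH' : Integrable (fun p : R3 => p.2 * ‖f p‖ ^ 2)
        ((volume : Measure R2).prod volume) := by rwa [← hvol]
    rw [hvol, MeasureTheory.integral_prod _ IK']
    rw [show (0:ℝ) = ∫ _ : R2, (0:ℝ) by simp]
    apply integral_congr_ae
    filter_upwards [IK'.prod_right_ae, IH'.prod_right_ae] with x hKx hHx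
    exact integral_eq_zero_of_hasDerivAt_of_integrable
      (fun z => hderiv x z) hKx hHx
  have hsplit : (∫ p : R3, ‖f p‖ ^ 2) = -(∫ p : R3, p.2 * Dp p) := by
    have := integral_add I1 ID
    rw [hK0] at this
    linarith
  -- main estimate
  have key : ω * (∫ p : R3, ‖f p‖ ^ 2)
      ≤ ∫ p : R3, (‖fz p‖ ^ 2 + ω ^ 2 * (p.2 ^ 2 * ‖f p‖ ^ 2)) := by
    have hsm : (∫ p : R3, (-ω) * (p.2 * Dp p)) = (-ω) * ∫ p : R3, p.2 * Dp p := by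
      simpa using integral_smul (-ω) (fun p : R3 => p.2 * Dp p)
    have h1 : ω * (∫ p : R3, ‖f p‖ ^ 2)
        = ∫ p : R3, (-ω) * (p.2 * Dp p) := by
      rw [hsm, hsplit]; ring
    rw [h1]
    refine integral_mono (ID.const_mul _) (I2.add (IZ.const_mul _)) fun p => ?_
    have hna := norm_sq_complex (f p)
    have hnb := norm_sq_complex (fz p)
    simp only [hDp]
    rw [hna, hnb]
    nlinarith [sq_nonneg (ω * p.2 * (f p).re + (fz p).re),
      sq_nonneg (ω * p.2 * (f p).im + (fz p).im)]
  have hGz : (∫ p : R3, ‖pd ez (⇑f) p‖ ^ 2) = ∫ p : R3, ‖fz p‖ ^ 2 := by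
    apply integral_congr_ae
    filter_upwards with p
    rw [hfz p]
  rw [hGz]
  have hsm2 : (∫ p : R3, ω ^ 2 * (p.2 ^ 2 * ‖f p‖ ^ 2))
      = ω ^ 2 * ∫ p : R3, p.2 ^ 2 * ‖f p‖ ^ 2 := by
    simpa using integral_smul (ω ^ 2) (fun p : R3 => p.2 ^ 2 * ‖f p‖ ^ 2)
  rw [integral_add I2 (IZ.const_mul _), hsm2] at key
  exact key

/-- Pure arithmetic for the final estimate. -/
lemma arith_final (ω A G0 G1 Gz Z : ℝ) (hω : 1 ≤ ω) (hA : 0 ≤ A)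
    (hG0 : 0 ≤ G0) (hG1 : 0 ≤ G1) (hZ : 0 ≤ Z)
    (hosc : ω * A ≤ Gz + ω ^ 2 * Z) :
    G0 + G1 + Gz ≤ 3 * ω * (A + (G0 + G1) + Gz + ω ^ 2 * Z - ω * A) := by
  have hW : 0 ≤ ω ^ 2 * Z := by positivity
  set E := A + (G0 + G1) + Gz + ω ^ 2 * Z - ω * A with hE
  have hAE : A + G0 + G1 ≤ E := by rw [hE]; linarith
  have hAE' : A ≤ E := by linarith
  have hE0 : 0 ≤ E := by linarith
  have h1 : (ω - 1) * A ≤ (ω - 1) * E :=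
    mul_le_mul_of_nonneg_left hAE' (by linarith)
  have h2 : 0 ≤ (ω - 1) * E := mul_nonneg (by linarith) hE0
  nlinarith [h1, h2, hosc, hA, hG0, hG1, hW, hE0]

/-- there is `C > 0` such that, for every `ω ≥ 1` and every Schwartz
function `f` on ℝ³, `‖∇f‖²_{L²} ≤ C ω E_ω(f)`. -/
theorem gradient_bound_by_energy_form :
    ∃ C : ℝ, 0 < C ∧ ∀ ω : ℝ, 1 ≤ ω → ∀ f : SchwartzMap R3 ℂ,
      (∫ p : R3, ‖pd ex0 (⇑f) p‖ ^ 2) + (∫ p : R3, ‖pd ex1 (⇑f) p‖ ^ 2) +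
          (∫ p : R3, ‖pd ez (⇑f) p‖ ^ 2) ≤
        C * ω * Eform ω (⇑f) := by
  refine ⟨3, by norm_num, fun ω hω f => ?_⟩
  have hosc := oscillator_bound ω f
  have hA : 0 ≤ ∫ p : R3, ‖f p‖ ^ 2 :=
    integral_nonneg fun p => by positivity
  have hG0 : 0 ≤ ∫ p : R3, ‖pd ex0 (⇑f) p‖ ^ 2 :=
    integral_nonneg fun p => by positivity
  have hG1 : 0 ≤ ∫ p : R3, ‖pd ex1 (⇑f) p‖ ^ 2 :=
    integral_nonneg fun p => by positivity
  have hZ : 0 ≤ ∫ p : R3, p.2 ^ 2 * ‖f p‖ ^ 2 :=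
    integral_nonneg fun p => by positivity
  simp only [Eform]
  exact arith_final ω _ _ _ _ _ hω hA hG0 hG1 hZ hosc
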